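/- Let M := max_{x∈V} d_x^{-1/2}. For every λ > 0 and all x, y ∈ V, one has 0 ≤ KD_λ(x,y) ≤ 2λ·vol(V)^{1/2}·M + d(x,y); in particular KD_λ(x,y) is finite. -/

import Mathlib

open scoped BigOperators

noncomputable section

namespace HypRicci

variable {V : Type*} [Fintype V] [DecidableEq V]

/-- A finite weighted hypergraph on vertex set `V`: a finite set of nonempty
hyperedges together with positive weights. -/
structure Hypergraph (V : Type*) [Fintype V] [DecidableEq V] : Type _ where
  E : Finset (Finset V)
  w : Finset V → ℝ
  w_pos : ∀ e ∈ E, 0 < w e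
  e_nonempty : ∀ e ∈ E, e.Nonempty

/-- Degree `d_x = ∑_{e ∋ x} w(e)`. -/
def deg (H : Hypergraph V) (x : V) : ℝ := ∑ e ∈ H.E, if x ∈ e then H.w e else 0

/-- Volume `vol(V) = ∑_x d_x`. -/
def vol (H : Hypergraph V) : ℝ := ∑ x, deg H x

/-- Weighted inner product `⟨f,g⟩ = ∑_x f(x) g(x) / d_x`. -/
def inn (H : Hypergraph V) (f g : V → ℝ) : ℝ := ∑ x, f x * g x / deg H x

/-- Norm associated to `inn`. -/
def nrm (H : Hypergraph V) (f : V → ℝ) : ℝ := Real.sqrt (inn H f f)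

/-- Indicator function `δ_x`. -/
def delta (x : V) : V → ℝ := fun z => if z = x then 1 else 0

/-- Standard (unweighted) dot product `u^⊤ v`. -/
def dot (u v : V → ℝ) : ℝ := ∑ x, u x * v x

/-- Base polytope `B_e = conv{δ_x − δ_y : x,y ∈ e}`. -/
def Bp (e : Finset V) : Set (V → ℝ) :=
  convexHull ℝ {b : V → ℝ | ∃ x ∈ e, ∃ y ∈ e, b = delta x - delta y}

/-- The multivalued hypergraph Laplacian
`L(f) = {∑_e w(e) (b_e^⊤ f) b_e : b_e ∈ argmax_{b ∈ B_e} b^⊤ f}`. -/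
def Lap (H : Hypergraph V) (f : V → ℝ) : Set (V → ℝ) :=
  { g | ∃ b : Finset V → (V → ℝ),
      (∀ e ∈ H.E, b e ∈ Bp e ∧ ∀ b' ∈ Bp e, dot b' f ≤ dot (b e) f) ∧
      g = ∑ e ∈ H.E, (H.w e * dot (b e) f) • b e }

/-- `D⁻¹ f`. -/
def Dinv (H : Hypergraph V) (f : V → ℝ) : V → ℝ := fun x => f x / deg H x

/-- Normalized Laplacian `𝓛(f) = L(D⁻¹ f)`. -/
def NL (H : Hypergraph V) (f : V → ℝ) : Set (V → ℝ) := Lap H (Dinv H f)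

/-- The resolvent `J_λ = (I + λ𝓛)⁻¹`: it sends `f` to the (unique) `g` with
`f ∈ g + λ 𝓛(g)`. -/
def Resolvent (H : Hypergraph V) (l : ℝ) (f : V → ℝ) : V → ℝ :=
  Classical.epsilon fun g => ∃ h ∈ NL H g, f = g + l • h

/-- Adjacency: `x ∼ y` iff some hyperedge contains both. -/
def Adj (H : Hypergraph V) (x y : V) : Prop := ∃ e ∈ H.E, x ∈ e ∧ y ∈ e

/-- There is a chain of length `n` of successively adjacent vertices from `x` to `y`. -/
def chainProp (H : Hypergraph V) (x y : V) (n : ℕ) : Prop :=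
  ∃ z : ℕ → V, z 0 = x ∧ z n = y ∧ ∀ i < n, Adj H (z i) (z (i + 1))

/-- Connectedness of the hypergraph. -/
def Connected (H : Hypergraph V) : Prop := ∀ x y : V, ∃ n, chainProp H x y n

/-- Graph distance (as a natural number). -/
def hdistN (H : Hypergraph V) (x y : V) : ℕ := sInf {n | chainProp H x y n}

/-- Graph distance `d(x,y)` as a real number. -/
def gdist (H : Hypergraph V) (x y : V) : ℝ := (hdistN H x y : ℝ)

/-- Diameter `diam(H) = max_{x,y} d(x,y)`. -/
def hdiam (H : Hypergraph V) : ℝ :=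
  (((Finset.univ : Finset (V × V)).sup fun p => hdistN H p.1 p.2 : ℕ) : ℝ)

/-- Weighted `1`-Lipschitz functions: `⟨f, δ_x − δ_y⟩ ≤ d(x,y)` for all `x, y`. -/
def Lip1 (H : Hypergraph V) : Set (V → ℝ) :=
  { f | ∀ x y : V, inn H f (delta x - delta y) ≤ gdist H x y }

/-- The `λ`-nonlinear Kantorovich difference. -/
def KD (H : Hypergraph V) (l : ℝ) (x y : V) : ℝ :=
  sSup { r | ∃ f ∈ Lip1 H, r = inn H (Resolvent H l f) (delta x - delta y) }

/-- `κ_λ(x,y) = 1 − KD_λ(x,y)/d(x,y)`. -/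
def kappa (H : Hypergraph V) (l : ℝ) (x y : V) : ℝ := 1 - KD H l x y / gdist H x y

/-- Lower coarse Ricci curvature `κ̲(x,y) = liminf_{λ↓0} κ_λ(x,y)/λ`. -/
def kappaLower (H : Hypergraph V) (x y : V) : EReal :=
  Filter.liminf (fun l : ℝ => ((kappa H l x y / l : ℝ) : EReal)) (nhdsWithin 0 (Set.Ioi 0))

/-- Upper coarse Ricci curvature `κ̄(x,y) = limsup_{λ↓0} κ_λ(x,y)/λ`. -/
def kappaUpper (H : Hypergraph V) (x y : V) : EReal :=
  Filter.limsup (fun l : ℝ => ((kappa H l x y / l : ℝ) : EReal)) (nhdsWithin 0 (Set.Ioi 0))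

/-- Canonical restriction `𝓛⁰ f`: the unique element of minimal norm of `𝓛(f)`. -/
def L0 (H : Hypergraph V) (f : V → ℝ) : V → ℝ :=
  Classical.epsilon fun g => g ∈ NL H f ∧ ∀ h ∈ NL H f, nrm H g ≤ nrm H h

/-- The stationary distribution `π(x) = d_x / vol(V)`. -/
def piH (H : Hypergraph V) : V → ℝ := fun x => deg H x / vol H

/-- The energy `Q(h) = (1/2) ∑_e w(e) max_{x,y ∈ e} (h(x) − h(y))²`. -/
def Qform (H : Hypergraph V) (h : V → ℝ) : ℝ :=
  (1 / 2) * ∑ e ∈ H.E, H.w e * sSup { r | ∃ x ∈ e, ∃ y ∈ e, r = (h x - h y) ^ 2 }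


section AuxDev
/-! ### Auxiliary development -/
set_option linter.unusedSectionVars false

def gen (p : V × V) : V → ℝ := delta p.1 - delta p.2

def ell (H : Hypergraph V) (p : V × V) (g : V → ℝ) : ℝ :=
  g p.1 / deg H p.1 - g p.2 / deg H p.2

def phi (H : Hypergraph V) (e : Finset V) (g : V → ℝ) : ℝ :=
  if h : (e ×ˢ e).Nonempty then (e ×ˢ e).sup' h (fun p => ell H p g) else 0

variable {H : Hypergraph V}

lemma pairs_nonempty {e : Finset V} (he : e.Nonempty) : (e ×ˢ e).Nonempty :=
  he.product he

lemma w_nonneg {e : Finset V} (he : e ∈ H.E) : 0 ≤ H.w e := (H.w_pos e he).le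

lemma dot_delta (g : V → ℝ) (x : V) : dot (delta x) g = g x := by
  simp [dot, delta, ite_mul]

lemma dot_sub_left (a b v : V → ℝ) : dot (a - b) v = dot a v - dot b v := by
  simp [dot, sub_mul, Finset.sum_sub_distrib]

lemma dot_add_left (a b v : V → ℝ) : dot (a + b) v = dot a v + dot b v := by
  simp [dot, add_mul, Finset.sum_add_distrib]

lemma dot_smul_left (c : ℝ) (a v : V → ℝ) : dot (c • a) v = c * dot a v := by
  simp [dot, Finset.mul_sum, mul_assoc]

lemma dot_gen_dinv (p : V × V) (g : V → ℝ) :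
    dot (gen p) (Dinv H g) = ell H p g := by
  simp [gen, dot_sub_left, dot_delta, ell, Dinv]

lemma dot_sum_smul {ι : Type*} (s : Finset ι) (c : ι → ℝ) (u : ι → V → ℝ) (v : V → ℝ) :
    dot (∑ i ∈ s, c i • u i) v = ∑ i ∈ s, c i * dot (u i) v := by
  classical
  induction s using Finset.induction_on with
  | empty => simp [dot]
  | @insert a s h ih =>
    rw [Finset.sum_insert h, dot_add_left, dot_smul_left, ih, Finset.sum_insert h]

lemma inn_eq_dot (f g : V → ℝ) : inn H f g = dot f (Dinv H g) := by
  simp [inn, dot, Dinv, mul_div_assoc]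

lemma inn_comm (f g : V → ℝ) : inn H f g = inn H g f := by
  simp only [inn]; exact Finset.sum_congr rfl fun z _ => by ring

lemma inn_sub_left (a b c : V → ℝ) : inn H (a - b) c = inn H a c - inn H b c := by
  simp only [inn, Pi.sub_apply, ← Finset.sum_sub_distrib]
  exact Finset.sum_congr rfl fun z _ => by ring

lemma inn_add_left (a b c : V → ℝ) : inn H (a + b) c = inn H a c + inn H b c := by
  simp only [inn, Pi.add_apply, ← Finset.sum_add_distrib]
  exact Finset.sum_congr rfl fun z _ => by ring

lemma inn_smul_left (t : ℝ) (a c : V → ℝ) : inn H (t • a) c = t * inn H a c := by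
  simp only [inn, Pi.smul_apply, smul_eq_mul, Finset.mul_sum]
  exact Finset.sum_congr rfl fun z _ => by ring

lemma inn_zero_left (c : V → ℝ) : inn H 0 c = 0 := by simp [inn]

lemma inn_self_nonneg (hdeg : ∀ x : V, 0 < deg H x) (f : V → ℝ) : 0 ≤ inn H f f :=
  Finset.sum_nonneg fun z _ => div_nonneg (mul_self_nonneg _) (hdeg z).le

lemma sq_div_le_inn (hdeg : ∀ x : V, 0 < deg H x) (f : V → ℝ) (z : V) :
    f z * f z / deg H z ≤ inn H f f :=
  Finset.single_le_sum (f := fun x => f x * f x / deg H x)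
    (fun x _ => div_nonneg (mul_self_nonneg _) (hdeg x).le) (Finset.mem_univ z)

lemma eq_zero_of_inn_self (hdeg : ∀ x : V, 0 < deg H x) {f : V → ℝ}
    (h : inn H f f ≤ 0) : f = 0 := by
  have h0 : inn H f f = 0 := le_antisymm h (inn_self_nonneg hdeg f)
  funext z
  have hz := (Finset.sum_eq_zero_iff_of_nonneg
    (fun x _ => div_nonneg (mul_self_nonneg (f x)) (hdeg x).le)).mp h0 z (Finset.mem_univ z)
  have hd := (hdeg z).ne'
  have : f z * f z = 0 := by
    field_simp at hz; nlinarith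
  simpa [mul_self_eq_zero] using this
lemma ell_le_phi {e : Finset V} (he : (e ×ˢ e).Nonempty) {p : V × V}
    (hp : p ∈ e ×ˢ e) (g : V → ℝ) : ell H p g ≤ phi H e g := by
  rw [phi, dif_pos he]; exact Finset.le_sup' (fun p => ell H p g) hp

lemma exists_phi {e : Finset V} (he : (e ×ˢ e).Nonempty) (g : V → ℝ) :
    ∃ p ∈ e ×ˢ e, phi H e g = ell H p g := by
  rw [phi, dif_pos he]; exact Finset.exists_mem_eq_sup' he (fun p => ell H p g)

lemma phi_le {e : Finset V} (he : (e ×ˢ e).Nonempty) {g : V → ℝ} {c : ℝ}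
    (h : ∀ p ∈ e ×ˢ e, ell H p g ≤ c) : phi H e g ≤ c := by
  rw [phi, dif_pos he]; exact Finset.sup'_le he _ h

lemma ell_diag (x : V) (g : V → ℝ) : ell H (x, x) g = 0 := by simp [ell]

lemma phi_nonneg {e : Finset V} (he : e.Nonempty) (g : V → ℝ) : 0 ≤ phi H e g := by
  obtain ⟨x, hx⟩ := he
  have := ell_le_phi (H := H) (pairs_nonempty ⟨x, hx⟩)
    (Finset.mk_mem_product hx hx) g
  rwa [ell_diag] at this

lemma gen_mem_Bp {e : Finset V} {p : V × V} (hp : p ∈ e ×ˢ e) : gen p ∈ Bp e := by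
  rw [Finset.mem_product] at hp
  exact subset_convexHull ℝ _ ⟨p.1, hp.1, p.2, hp.2, rfl⟩

lemma zero_mem_Bp {e : Finset V} (he : e.Nonempty) : (0 : V → ℝ) ∈ Bp e := by
  obtain ⟨x, hx⟩ := he
  have := gen_mem_Bp (e := e) (p := (x, x)) (Finset.mk_mem_product hx hx)
  simpa [gen] using this

lemma dot_le_on_hull {s : Set (V → ℝ)} {v : V → ℝ} {c : ℝ}
    (hgen : ∀ b ∈ s, dot b v ≤ c) {b : V → ℝ} (hb : b ∈ convexHull ℝ s) :
    dot b v ≤ c := by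
  have hconv : Convex ℝ {b : V → ℝ | dot b v ≤ c} := by
    intro b1 h1 b2 h2 a b ha hb hab
    simp only [Set.mem_setOf_eq] at h1 h2 ⊢
    rw [dot_add_left, dot_smul_left, dot_smul_left]
    calc a * dot b1 v + b * dot b2 v ≤ a * c + b * c := by
          apply add_le_add (mul_le_mul_of_nonneg_left h1 ha)
            (mul_le_mul_of_nonneg_left h2 hb)
      _ = c := by rw [← add_mul, hab, one_mul]
  exact convexHull_min hgen hconv hb

lemma dot_eq_on_hull {s : Set (V → ℝ)} {v : V → ℝ} {c : ℝ}
    (hgen : ∀ b ∈ s, dot b v = c) {b : V → ℝ} (hb : b ∈ convexHull ℝ s) :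
    dot b v = c := by
  have hconv : Convex ℝ {b : V → ℝ | dot b v = c} := by
    intro b1 h1 b2 h2 a b ha hb hab
    simp only [Set.mem_setOf_eq] at h1 h2 ⊢
    rw [dot_add_left, dot_smul_left, dot_smul_left, h1, h2, ← add_mul, hab, one_mul]
  exact convexHull_min hgen hconv hb

lemma dot_dinv_le_phi {e : Finset V} (he : e.Nonempty) {b : V → ℝ}
    (hb : b ∈ Bp e) (g : V → ℝ) : dot b (Dinv H g) ≤ phi H e g := by
  refine dot_le_on_hull ?_ hb
  rintro b' ⟨u, hu, v, hv, rfl⟩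
  have : delta u - delta v = gen (u, v) := rfl
  rw [this, dot_gen_dinv]
  exact ell_le_phi (pairs_nonempty he) (Finset.mk_mem_product hu hv) g

lemma gdist_nonneg (x y : V) : 0 ≤ gdist H x y := Nat.cast_nonneg _

lemma gdist_le_one {e : Finset V} (he : e ∈ H.E) {x y : V} (hx : x ∈ e)
    (hy : y ∈ e) : gdist H x y ≤ 1 := by
  have h1 : chainProp H x y 1 := by
    refine ⟨fun i => if i = 0 then x else y, by simp, by simp, ?_⟩
    intro i hi
    interval_cases i
    simpa using ⟨e, he, hx, hy⟩
  have : hdistN H x y ≤ 1 := Nat.sInf_le h1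
  rw [gdist]
  exact_mod_cast this

lemma dot_dinv_delta (f : V → ℝ) (x : V) :
    dot f (Dinv H (delta x)) = f x / deg H x := by
  rw [show dot f (Dinv H (delta x)) = ∑ z, if z = x then f z / deg H z else 0 from
    Finset.sum_congr rfl fun z _ => by by_cases h : z = x <;> simp [dot, Dinv, delta, h, div_eq_mul_inv]]
  simp

lemma dot_sub_right (v a b : V → ℝ) : dot v (a - b) = dot v a - dot v b := by
  simp [dot, mul_sub, Finset.sum_sub_distrib]

lemma inn_delta_sub (f : V → ℝ) (x y : V) :
    inn H f (delta x - delta y) = ell H (x, y) f := by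
  rw [inn_eq_dot]
  have : Dinv H (delta x - delta y) = Dinv H (delta x) - Dinv H (delta y) := by
    funext z; simp [Dinv, sub_div]
  rw [this, dot_sub_right, dot_dinv_delta, dot_dinv_delta, ell]

lemma ell_eq_inn (f : V → ℝ) (p : V × V) :
    ell H p f = inn H f (delta p.1 - delta p.2) := by
  rw [inn_delta_sub]

lemma phi_le_one_of_lip {f : V → ℝ} (hf : f ∈ Lip1 H) {e : Finset V}
    (he : e ∈ H.E) : phi H e f ≤ 1 := by
  refine phi_le (pairs_nonempty (H.e_nonempty e he)) ?_
  intro p hp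
  rw [Finset.mem_product] at hp
  calc ell H p f = inn H f (delta p.1 - delta p.2) := ell_eq_inn f p
    _ ≤ gdist H p.1 p.2 := hf p.1 p.2
    _ ≤ 1 := gdist_le_one he hp.1 hp.2

lemma abs_gen_le_one (p : V × V) (z : V) : |gen p z| ≤ 1 := by
  simp only [gen, Pi.sub_apply, delta]
  split_ifs <;> norm_num

lemma gen_eq_zero {e : Finset V} {p : V × V} (hp : p ∈ e ×ˢ e) {z : V}
    (hz : z ∉ e) : gen p z = 0 := by
  rw [Finset.mem_product] at hp
  have h1 : z ≠ p.1 := fun h => hz (h ▸ hp.1)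
  have h2 : z ≠ p.2 := fun h => hz (h ▸ hp.2)
  simp [gen, delta, h1, h2]
lemma dot_zero_left (v : V → ℝ) : dot 0 v = 0 := by simp [dot]

lemma inn_sub_right (a b c : V → ℝ) : inn H a (b - c) = inn H a b - inn H a c := by
  rw [inn_comm, inn_sub_left, inn_comm b a, inn_comm c a]

lemma inn_smul_right (t : ℝ) (a c : V → ℝ) : inn H a (t • c) = t * inn H a c := by
  rw [inn_comm, inn_smul_left, inn_comm]

lemma inn_sum_smul {ι : Type*} (s : Finset ι) (c : ι → ℝ) (u : ι → V → ℝ) (v : V → ℝ) :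
    inn H (∑ i ∈ s, c i • u i) v = ∑ i ∈ s, c i * dot (u i) (Dinv H v) := by
  rw [inn_eq_dot, dot_sum_smul]

lemma lap_inn_self_nonneg {g h : V → ℝ} (hh : h ∈ NL H g) : 0 ≤ inn H h g := by
  obtain ⟨b, hb, rfl⟩ := hh
  rw [inn_sum_smul]
  refine Finset.sum_nonneg fun e he => ?_
  have hc : 0 ≤ dot (b e) (Dinv H g) := by
    have := (hb e he).2 0 (zero_mem_Bp (H.e_nonempty e he))
    simpa [dot_zero_left] using this
  exact mul_nonneg (mul_nonneg (w_nonneg he) hc) hc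

lemma resolvent_key [Nonempty V] (hdeg : ∀ x : V, 0 < deg H x) {l : ℝ} (hl : 0 < l)
    {f g h : V → ℝ} (hf : f ∈ Lip1 H) (hh : h ∈ NL H g) (heq : f = g + l • h) :
    inn H h h ≤ vol H := by
  obtain ⟨b, hb, hhe⟩ := hh
  have hex : ∀ e : Finset V, ∃ p : V × V,
      e ∈ H.E → (p ∈ e ×ˢ e ∧ phi H e f = ell H p f) := by
    intro e
    by_cases he : e ∈ H.E
    · obtain ⟨p, hp, hpe⟩ := exists_phi (pairs_nonempty (H.e_nonempty e he)) f
      exact ⟨p, fun _ => ⟨hp, hpe⟩⟩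
    · exact ⟨(Classical.arbitrary V, Classical.arbitrary V), fun h => absurd h he⟩
  choose pick hpick using hex
  set h₀ : V → ℝ := ∑ e ∈ H.E, (H.w e * phi H e f) • gen (pick e) with hh0
  have hcnn : ∀ e ∈ H.E, 0 ≤ dot (b e) (Dinv H g) := by
    intro e he
    have := (hb e he).2 0 (zero_mem_Bp (H.e_nonempty e he))
    simpa [dot_zero_left] using this
  have hphinn : ∀ e ∈ H.E, 0 ≤ phi H e f := fun e he =>
    phi_nonneg (H.e_nonempty e he) f
  have h1 : inn H h g = ∑ e ∈ H.E,
      (H.w e * dot (b e) (Dinv H g)) * dot (b e) (Dinv H g) := by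
    rw [hhe, inn_sum_smul]
  have h2 : inn H h f ≤ ∑ e ∈ H.E,
      (H.w e * dot (b e) (Dinv H g)) * phi H e f := by
    rw [hhe, inn_sum_smul]
    refine Finset.sum_le_sum fun e he => ?_
    exact mul_le_mul_of_nonneg_left
      (dot_dinv_le_phi (H.e_nonempty e he) (hb e he).1 f)
      (mul_nonneg (w_nonneg he) (hcnn e he))
  have h3 : inn H h₀ g ≤ ∑ e ∈ H.E,
      (H.w e * phi H e f) * dot (b e) (Dinv H g) := by
    rw [hh0, inn_sum_smul]
    refine Finset.sum_le_sum fun e he => ?_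
    refine mul_le_mul_of_nonneg_left ?_ (mul_nonneg (w_nonneg he) (hphinn e he))
    exact (hb e he).2 (gen (pick e)) (gen_mem_Bp (hpick e he).1)
  have h4 : inn H h₀ f = ∑ e ∈ H.E, (H.w e * phi H e f) * phi H e f := by
    rw [hh0, inn_sum_smul]
    refine Finset.sum_congr rfl fun e he => ?_
    rw [dot_gen_dinv, ← (hpick e he).2]
  have hsq : 0 ≤ ∑ e ∈ H.E,
      H.w e * ((dot (b e) (Dinv H g) - phi H e f) * (dot (b e) (Dinv H g) - phi H e f)) :=
    Finset.sum_nonneg fun e he => mul_nonneg (w_nonneg he) (mul_self_nonneg _)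
  have hsum : ∑ e ∈ H.E, (H.w e * dot (b e) (Dinv H g)) * dot (b e) (Dinv H g)
      - ∑ e ∈ H.E, (H.w e * dot (b e) (Dinv H g)) * phi H e f
      - ∑ e ∈ H.E, (H.w e * phi H e f) * dot (b e) (Dinv H g)
      + ∑ e ∈ H.E, (H.w e * phi H e f) * phi H e f
      = ∑ e ∈ H.E, H.w e *
        ((dot (b e) (Dinv H g) - phi H e f) * (dot (b e) (Dinv H g) - phi H e f)) := by
    rw [← Finset.sum_sub_distrib, ← Finset.sum_sub_distrib, ← Finset.sum_add_distrib]
    exact Finset.sum_congr rfl fun e _ => by ring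
  have hgf : g - f = (-l) • h := by
    rw [heq]; funext z; simp
  have e1 : inn H h (g - f) = -l * inn H h h := by rw [hgf, inn_smul_right]
  have e2 : inn H h₀ (g - f) = -l * inn H h₀ h := by rw [hgf, inn_smul_right]
  have e3 : inn H h (g - f) = inn H h g - inn H h f := inn_sub_right _ _ _
  have e4 : inn H h₀ (g - f) = inn H h₀ g - inn H h₀ f := inn_sub_right _ _ _
  have hkey : inn H h h ≤ inn H h₀ h := by
    have hge : inn H h (g - f) - inn H h₀ (g - f) ≥ 0 := by
      rw [e3, e4]; linarith [hsum]
    rw [e1, e2] at hge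
    nlinarith
  have hch : inn H h h ≤ inn H h₀ h₀ := by
    have hs := inn_self_nonneg hdeg (h₀ - h)
    have hexp : inn H (h₀ - h) (h₀ - h)
        = inn H h₀ h₀ - 2 * inn H h₀ h + inn H h h := by
      rw [inn_sub_left, inn_sub_right, inn_sub_right, inn_comm h h₀]; ring
    linarith
  have hpt : ∀ z, |h₀ z| ≤ deg H z := by
    intro z
    have hz0 : h₀ z = ∑ e ∈ H.E, (H.w e * phi H e f) * gen (pick e) z := by
      simp only [hh0, Finset.sum_apply, Pi.smul_apply, smul_eq_mul]
    rw [hz0]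
    calc |∑ e ∈ H.E, (H.w e * phi H e f) * gen (pick e) z|
        ≤ ∑ e ∈ H.E, |(H.w e * phi H e f) * gen (pick e) z| :=
          Finset.abs_sum_le_sum_abs _ _
      _ ≤ ∑ e ∈ H.E, (if z ∈ e then H.w e else 0) := by
          refine Finset.sum_le_sum fun e he => ?_
          by_cases hz : z ∈ e
          · rw [if_pos hz, abs_mul,
              abs_of_nonneg (mul_nonneg (w_nonneg he) (hphinn e he))]
            have hg1 := abs_gen_le_one (pick e) z
            have hw := w_nonneg he
            have hp0 := hphinn e he
            have hp1 := phi_le_one_of_lip hf he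
            have hga := abs_nonneg (gen (pick e) z)
            nlinarith [mul_nonneg hw hp0, mul_le_mul_of_nonneg_left hg1 (mul_nonneg hw hp0),
              mul_le_mul_of_nonneg_left hp1 hw]
          · rw [if_neg hz, gen_eq_zero (hpick e he).1 hz]; simp
      _ = deg H z := rfl
  have hvol : inn H h₀ h₀ ≤ vol H := by
    refine Finset.sum_le_sum fun z _ => ?_
    rw [div_le_iff₀ (hdeg z)]
    have := hpt z
    nlinarith [abs_nonneg (h₀ z), abs_mul_abs_self (h₀ z), (hdeg z).le]
  linarith
def Ae (H : Hypergraph V) (e : Finset V) (g : V → ℝ) : Finset (V × V) :=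
  (e ×ˢ e).filter (fun p => ell H p g = phi H e g)

def mA (H : Hypergraph V) (e : Finset V) (g v : V → ℝ) : ℝ :=
  if h : (Ae H e g).Nonempty then (Ae H e g).sup' h (fun p => ell H p v) else 0

lemma Ae_nonempty {e : Finset V} (he : e ∈ H.E) (g : V → ℝ) : (Ae H e g).Nonempty := by
  obtain ⟨p, hp, hpe⟩ := exists_phi (pairs_nonempty (H.e_nonempty e he)) g
  exact ⟨p, Finset.mem_filter.mpr ⟨hp, hpe.symm⟩⟩

lemma ell_le_mA {e : Finset V} {g : V → ℝ} {p : V × V} (hp : p ∈ Ae H e g)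
    (v : V → ℝ) : ell H p v ≤ mA H e g v := by
  rw [mA, dif_pos ⟨p, hp⟩]
  exact Finset.le_sup' (fun p => ell H p v) hp

lemma exists_mA {e : Finset V} (he : e ∈ H.E) (g v : V → ℝ) :
    ∃ p ∈ Ae H e g, mA H e g v = ell H p v := by
  rw [mA, dif_pos (Ae_nonempty he g)]
  exact Finset.exists_mem_eq_sup' _ (fun p => ell H p v)

lemma ell_add_smul (p : V × V) (a v : V → ℝ) (t : ℝ) :
    ell H p (a + t • v) = ell H p a + t * ell H p v := by
  simp only [ell, Pi.add_apply, Pi.smul_apply, smul_eq_mul, add_div]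
  ring

lemma inn_add_right (a b c : V → ℝ) : inn H a (b + c) = inn H a b + inn H a c := by
  rw [inn_comm, inn_add_left, inn_comm b a, inn_comm c a]

lemma min_dir [Nonempty V] (hdeg : ∀ x : V, 0 < deg H x) {l : ℝ} (hl : 0 < l)
    {f g₀ : V → ℝ}
    (hmin : ∀ g, inn H (g₀ - f) (g₀ - f) + l * ∑ e ∈ H.E, H.w e * (phi H e g₀ * phi H e g₀)
      ≤ inn H (g - f) (g - f) + l * ∑ e ∈ H.E, H.w e * (phi H e g * phi H e g))
    (v : V → ℝ) :
    0 ≤ inn H (g₀ - f) v + l * ∑ e ∈ H.E, H.w e * (phi H e g₀ * mA H e g₀ v) := by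
  set l₀ := nhdsWithin (0:ℝ) (Set.Ioi 0) with hl₀
  set S1 := ∑ e ∈ H.E, H.w e * (phi H e g₀ * mA H e g₀ v) with hS1
  set S2 := ∑ e ∈ H.E, H.w e * (mA H e g₀ v * mA H e g₀ v) with hS2
  set D := inn H (g₀ - f) v + l * S1 with hD
  set C := inn H v v + l * S2 with hC
  have hCnn : 0 ≤ C := by
    have h1 : 0 ≤ S2 := Finset.sum_nonneg fun e he =>
      mul_nonneg (w_nonneg he) (mul_self_nonneg _)
    have := inn_self_nonneg hdeg v
    nlinarith
  have hev : ∀ e ∈ H.E, ∀ᶠ t in l₀,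
      phi H e (g₀ + t • v) ≤ phi H e g₀ + t * mA H e g₀ v ∧
      0 ≤ phi H e g₀ + t * mA H e g₀ v := by
    intro e he
    have hne := pairs_nonempty (H.e_nonempty e he)
    have hi : ∀ p ∈ e ×ˢ e, ∀ᶠ t in l₀,
        ell H p (g₀ + t • v) ≤ phi H e g₀ + t * mA H e g₀ v := by
      intro p hp
      by_cases hpA : p ∈ Ae H e g₀
      · filter_upwards [self_mem_nhdsWithin] with t ht
        rw [ell_add_smul]
        have h1 : ell H p g₀ = phi H e g₀ := (Finset.mem_filter.mp hpA).2
        have h2 : ell H p v ≤ mA H e g₀ v := ell_le_mA hpA v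
        have htp : (0:ℝ) < t := ht
        nlinarith
      · have hlt : ell H p g₀ < phi H e g₀ :=
          lt_of_le_of_ne (ell_le_phi hne hp g₀)
            (fun hcon => hpA (Finset.mem_filter.mpr ⟨hp, hcon⟩))
        have hcont : Continuous (fun t : ℝ =>
            ell H p g₀ + t * ell H p v - (phi H e g₀ + t * mA H e g₀ v)) := by
          continuity
        have htend : Filter.Tendsto (fun t : ℝ =>
            ell H p g₀ + t * ell H p v - (phi H e g₀ + t * mA H e g₀ v)) l₀
            (nhds (ell H p g₀ - phi H e g₀)) := by
          apply tendsto_nhdsWithin_of_tendsto_nhds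
          simpa using hcont.tendsto 0
        have hevlt := htend.eventually_lt_const (show ell H p g₀ - phi H e g₀ < 0 by linarith)
        filter_upwards [hevlt] with t ht
        rw [ell_add_smul]; linarith
    have hii : ∀ᶠ t in l₀, ∀ p ∈ e ×ˢ e,
        ell H p (g₀ + t • v) ≤ phi H e g₀ + t * mA H e g₀ v :=
      (Filter.eventually_all_finset _).mpr hi
    have hpos : ∀ᶠ t in l₀, 0 ≤ phi H e g₀ + t * mA H e g₀ v := by
      rcases le_or_gt 0 (mA H e g₀ v) with hm | hm
      · filter_upwards [self_mem_nhdsWithin] with t ht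
        have htp : (0:ℝ) < t := ht
        have := phi_nonneg (H := H) (H.e_nonempty e he) g₀
        nlinarith
      · have hφpos : 0 < phi H e g₀ := by
          rcases eq_or_lt_of_le (phi_nonneg (H.e_nonempty e he) g₀) with h0 | h0
          · exfalso
            obtain ⟨x, hx⟩ := H.e_nonempty e he
            have hdiag : (x, x) ∈ Ae H e g₀ :=
              Finset.mem_filter.mpr ⟨Finset.mk_mem_product hx hx, by rw [ell_diag, h0]⟩
            have h2 := ell_le_mA (H := H) hdiag v
            rw [ell_diag] at h2; linarith
          · exact h0
        have hcont : Continuous (fun t : ℝ => phi H e g₀ + t * mA H e g₀ v) := by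
          continuity
        have htend : Filter.Tendsto (fun t : ℝ => phi H e g₀ + t * mA H e g₀ v) l₀
            (nhds (phi H e g₀)) := by
          apply tendsto_nhdsWithin_of_tendsto_nhds
          simpa using hcont.tendsto 0
        have := htend.eventually_const_lt hφpos
        filter_upwards [this] with t ht; linarith
    filter_upwards [hii, hpos] with t h1 h2
    exact ⟨phi_le hne h1, h2⟩
  have hev2 : ∀ᶠ t in l₀, ∀ e ∈ H.E,
      phi H e (g₀ + t • v) ≤ phi H e g₀ + t * mA H e g₀ v ∧
      0 ≤ phi H e g₀ + t * mA H e g₀ v :=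
    (Filter.eventually_all_finset _).mpr hev
  have hFineq : ∀ᶠ t in l₀, 0 ≤ 2 * D + t * C := by
    filter_upwards [hev2, self_mem_nhdsWithin] with t hte ht
    have htp : (0:ℝ) < t := ht
    have hq : inn H (g₀ + t • v - f) (g₀ + t • v - f)
        = inn H (g₀ - f) (g₀ - f) + 2 * t * inn H (g₀ - f) v + t * t * inn H v v := by
      have h1 : g₀ + t • v - f = (g₀ - f) + t • v := by
        funext z; simp; ring
      rw [h1, inn_add_left, inn_add_right, inn_add_right, inn_smul_left,
        inn_smul_right, inn_smul_left, inn_smul_right, inn_comm v (g₀ - f)]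
      ring
    have hΦ : ∑ e ∈ H.E, H.w e * (phi H e (g₀ + t • v) * phi H e (g₀ + t • v))
        ≤ ∑ e ∈ H.E, H.w e * (phi H e g₀ * phi H e g₀) + 2 * t * S1 + t * t * S2 := by
      have step1 : ∑ e ∈ H.E, H.w e * (phi H e (g₀ + t • v) * phi H e (g₀ + t • v))
          ≤ ∑ e ∈ H.E, H.w e * ((phi H e g₀ + t * mA H e g₀ v) *
            (phi H e g₀ + t * mA H e g₀ v)) := by
        refine Finset.sum_le_sum fun e he => ?_
        obtain ⟨ha, hb⟩ := hte e he
        have h0 : 0 ≤ phi H e (g₀ + t • v) := phi_nonneg (H.e_nonempty e he) _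
        exact mul_le_mul_of_nonneg_left (mul_self_le_mul_self h0 ha) (w_nonneg he)
      have step2 : ∑ e ∈ H.E, H.w e * ((phi H e g₀ + t * mA H e g₀ v) *
            (phi H e g₀ + t * mA H e g₀ v))
          = ∑ e ∈ H.E, H.w e * (phi H e g₀ * phi H e g₀) + 2 * t * S1 + t * t * S2 := by
        rw [hS1, hS2, Finset.mul_sum, Finset.mul_sum, ← Finset.sum_add_distrib,
          ← Finset.sum_add_distrib]
        exact Finset.sum_congr rfl fun e _ => by ring
      linarith
    have hmint := hmin (g₀ + t • v)
    rw [hq] at hmint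
    have : l * (∑ e ∈ H.E, H.w e * (phi H e (g₀ + t • v) * phi H e (g₀ + t • v)))
        ≤ l * (∑ e ∈ H.E, H.w e * (phi H e g₀ * phi H e g₀) + 2 * t * S1 + t * t * S2) :=
      mul_le_mul_of_nonneg_left hΦ hl.le
    have h2D : 0 ≤ 2 * t * inn H (g₀ - f) v + t * t * inn H v v
        + l * (2 * t * S1 + t * t * S2) := by nlinarith
    have hexp : 2 * t * inn H (g₀ - f) v + t * t * inn H v v
        + l * (2 * t * S1 + t * t * S2) = t * (2 * D + t * C) := by
      rw [hD, hC]; ring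
    rw [hexp] at h2D
    nlinarith
  have htendD : Filter.Tendsto (fun t : ℝ => 2 * D + t * C) l₀ (nhds (2 * D)) := by
    apply tendsto_nhdsWithin_of_tendsto_nhds
    have hcont : Continuous (fun t : ℝ => 2 * D + t * C) := by continuity
    simpa using hcont.tendsto 0
  have h2D : (0:ℝ) ≤ 2 * D := ge_of_tendsto htendD hFineq
  rw [hD] at h2D
  linarith [h2D]
lemma exists_min [Nonempty V] (hdeg : ∀ x : V, 0 < deg H x) {l : ℝ} (hl : 0 < l)
    (f : V → ℝ) :
    ∃ g₀ : V → ℝ, ∀ g,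
      inn H (g₀ - f) (g₀ - f) + l * ∑ e ∈ H.E, H.w e * (phi H e g₀ * phi H e g₀)
      ≤ inn H (g - f) (g - f) + l * ∑ e ∈ H.E, H.w e * (phi H e g * phi H e g) := by
  classical
  obtain ⟨Φ, hΦdef⟩ : ∃ Φ : (V → ℝ) → ℝ,
      Φ = fun g => ∑ e ∈ H.E, H.w e * (phi H e g * phi H e g) := ⟨_, rfl⟩
  obtain ⟨Fv, hFv⟩ : ∃ Fv : (V → ℝ) → ℝ,
      Fv = fun g => inn H (g - f) (g - f) + l * Φ g := ⟨_, rfl⟩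
  have hphic : ∀ e ∈ H.E, Continuous (fun g : V → ℝ => phi H e g) := by
    intro e he
    have hne := pairs_nonempty (H.e_nonempty e he)
    have heq : (fun g : V → ℝ => phi H e g) = (e ×ˢ e).sup' hne (fun p g => ell H p g) := by
      funext g
      rw [phi, dif_pos hne, Finset.sup'_apply]
    rw [heq]
    refine Continuous.finset_sup' hne fun p _ => ?_
    simp only [ell]
    exact ((continuous_apply p.1).div_const _).sub ((continuous_apply p.2).div_const _)
  have hinnc : Continuous fun g : V → ℝ => inn H (g - f) (g - f) := by
    have h1 : (fun g : V → ℝ => inn H (g - f) (g - f))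
        = fun g => ∑ z, ((g z - f z) * (g z - f z) / deg H z) := by
      funext g; simp [inn]
    rw [h1]
    exact continuous_finset_sum _ fun z _ =>
      (((continuous_apply z).sub continuous_const).mul
        ((continuous_apply z).sub continuous_const)).div_const _
  have hΦc : Continuous Φ := by
    rw [hΦdef]
    exact continuous_finset_sum _ fun e he =>
      continuous_const.mul ((hphic e he).mul (hphic e he))
  have hFc : Continuous Fv := by
    rw [hFv]
    exact hinnc.add (continuous_const.mul hΦc)
  have hΦnn : ∀ g, 0 ≤ Φ g := fun g => by
    rw [hΦdef]
    exact Finset.sum_nonneg fun e he => mul_nonneg (w_nonneg he) (mul_self_nonneg _)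
  have hFnn : ∀ g, 0 ≤ Fv g := fun g => by
    have h1 := inn_self_nonneg hdeg (g - f)
    have h2 := hΦnn g
    have := mul_nonneg hl.le h2
    rw [hFv]; dsimp only; linarith
  have hFlow : ∀ g, inn H (g - f) (g - f) ≤ Fv g := fun g => by
    have h2 := hΦnn g
    have := mul_nonneg hl.le h2
    rw [hFv]; dsimp only; linarith
  set dmax := Finset.univ.sup' Finset.univ_nonempty (deg H) with hdm
  have hdmax : ∀ z, deg H z ≤ dmax := fun z => Finset.le_sup' _ (Finset.mem_univ z)
  have hdmaxpos : 0 < dmax := lt_of_lt_of_le (hdeg (Classical.arbitrary V)) (hdmax _)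
  set R := Real.sqrt (Fv f * dmax) + 1 with hR
  have hRpos : 0 < R := by positivity
  have hRsq : Fv f * dmax < R * R := by
    have h0 : 0 ≤ Fv f * dmax := mul_nonneg (hFnn f) hdmaxpos.le
    have hs := Real.sq_sqrt h0
    nlinarith [Real.sqrt_nonneg (Fv f * dmax)]
  have hout : ∀ g : V → ℝ, R < dist g f → Fv f < Fv g := by
    intro g hg
    have hnd : ¬ dist g f ≤ R := not_le.mpr hg
    rw [dist_pi_le_iff hRpos.le] at hnd
    push_neg at hnd
    obtain ⟨z, hz⟩ := hnd
    rw [Real.dist_eq] at hz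
    have h1 : R * R ≤ (g z - f z) * (g z - f z) := by
      nlinarith [abs_nonneg (g z - f z), abs_mul_abs_self (g z - f z), hz.le]
    have h2 : R * R / dmax ≤ (g z - f z) * (g z - f z) / deg H z :=
      div_le_div₀ (mul_self_nonneg _) h1 (hdeg z) (hdmax z)
    have h3 : (g z - f z) * (g z - f z) / deg H z ≤ inn H (g - f) (g - f) := by
      have := sq_div_le_inn hdeg (g - f) z
      simpa using this
    have h4 : Fv f < R * R / dmax := by
      rw [lt_div_iff₀ hdmaxpos]; exact hRsq
    have h5 : inn H (g - f) (g - f) ≤ Fv g := hFlow g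
    linarith
  have hKc : IsCompact (Metric.closedBall f R) := isCompact_closedBall f R
  obtain ⟨g₀, hg₀K, hg₀min⟩ := hKc.exists_isMinOn
    ⟨f, Metric.mem_closedBall_self hRpos.le⟩ hFc.continuousOn
  refine ⟨g₀, fun g => ?_⟩
  have hglob : Fv g₀ ≤ Fv g := by
    by_cases hgK : g ∈ Metric.closedBall f R
    · exact isMinOn_iff.mp hg₀min g hgK
    · have hd : R < dist g f := by
        rw [Metric.mem_closedBall] at hgK
        exact not_le.mp hgK
      have h5 := hout g hd
      have hf0 : Fv g₀ ≤ Fv f :=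
        isMinOn_iff.mp hg₀min f (Metric.mem_closedBall_self hRpos.le)
      linarith
  rw [hFv, hΦdef] at hglob
  exact hglob
lemma resolvent_exists [Nonempty V] (hdeg : ∀ x : V, 0 < deg H x) {l : ℝ} (hl : 0 < l)
    (f : V → ℝ) : ∃ g : V → ℝ, ∃ h ∈ NL H g, f = g + l • h := by
  classical
  obtain ⟨g₀, hmin⟩ := exists_min hdeg hl f
  obtain ⟨Cset, hCdef⟩ : ∃ Cset : Set (V → ℝ), Cset = {c | ∃ bb : Finset V → V → ℝ,
      (∀ e ∈ H.E, bb e ∈ convexHull ℝ (↑((Ae H e g₀).image gen) : Set (V → ℝ))) ∧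
      c = ∑ e ∈ H.E, (H.w e * phi H e g₀) • bb e} := ⟨_, rfl⟩
  have hmemC : (l⁻¹ • (f - g₀)) ∈ Cset := by
    by_contra hc0
    have hconv : Convex ℝ Cset := by
      rw [hCdef]
      rintro c1 ⟨b1, hb1, rfl⟩ c2 ⟨b2, hb2, rfl⟩ a b ha hb hab
      refine ⟨fun e => a • b1 e + b • b2 e, fun e he =>
        (convex_convexHull ℝ _) (hb1 e he) (hb2 e he) ha hb hab, ?_⟩
      rw [Finset.smul_sum, Finset.smul_sum, ← Finset.sum_add_distrib]
      refine Finset.sum_congr rfl fun e _ => ?_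
      funext z
      simp only [Pi.smul_apply, Pi.add_apply, smul_eq_mul]
      ring
    have hclosed : IsClosed Cset := by
      have hKc : IsCompact (Set.univ.pi fun e : ↑H.E =>
          convexHull ℝ (↑((Ae H e.1 g₀).image gen) : Set (V → ℝ))) :=
        isCompact_univ_pi fun e => (Finset.finite_toSet _).isCompact_convexHull (𝕜 := ℝ)
      have hTc : Continuous (fun b : ↑H.E → V → ℝ =>
          ∑ e ∈ H.E.attach, (H.w e.1 * phi H e.1 g₀) • b e) :=
        continuous_finset_sum _ fun e _ => (continuous_apply e).const_smul (H.w e.1 * phi H e.1 g₀)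
      have himg : Cset = (fun b : ↑H.E → V → ℝ =>
          ∑ e ∈ H.E.attach, (H.w e.1 * phi H e.1 g₀) • b e) ''
          (Set.univ.pi fun e : ↑H.E =>
            convexHull ℝ (↑((Ae H e.1 g₀).image gen) : Set (V → ℝ))) := by
        rw [hCdef]; ext c; constructor
        · rintro ⟨bb, hbb, rfl⟩
          refine ⟨fun e => bb e.1, fun e _ => hbb e.1 e.2, ?_⟩
          show (∑ e ∈ H.E.attach, (H.w e.1 * phi H e.1 g₀) • bb e.1)
            = ∑ e ∈ H.E, (H.w e * phi H e g₀) • bb e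
          exact Finset.sum_attach H.E (fun e => (H.w e * phi H e g₀) • bb e)
        · rintro ⟨b, hbmem, rfl⟩
          refine ⟨fun e => if he : e ∈ H.E then b ⟨e, he⟩ else 0, fun e he => ?_, ?_⟩
          · show (if he : e ∈ H.E then b ⟨e, he⟩ else 0) ∈ _
            rw [dif_pos he]; exact hbmem ⟨e, he⟩ (Set.mem_univ _)
          · rw [← Finset.sum_attach H.E
              (fun e => (H.w e * phi H e g₀) • (if he : e ∈ H.E then b ⟨e, he⟩ else 0))]
            refine Finset.sum_congr rfl fun e _ => ?_
            rw [dif_pos e.2]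
      rw [himg]
      exact ((hKc.image hTc)).isClosed
    obtain ⟨φL, u, hsep1, hsep2⟩ := geometric_hahn_banach_closed_point hconv hclosed hc0
    obtain ⟨v, hv⟩ : ∃ v : V → ℝ, v = fun z => deg H z * φL (delta z) := ⟨_, rfl⟩
    have hdinv : Dinv H v = fun z => φL (delta z) := by
      funext z
      rw [hv]
      simp only [Dinv]
      exact mul_div_cancel_left₀ _ (hdeg z).ne'
    have hdotφ : ∀ c : V → ℝ, dot c (Dinv H v) = φL c := by
      intro c
      have hrep : c = ∑ z : V, c z • delta z := by
        funext j
        simp [Finset.sum_apply, delta, mul_ite, Finset.sum_ite_eq]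
      rw [hdinv]
      calc ∑ z : V, c z * φL (delta z) = φL (∑ z : V, c z • delta z) := by
            rw [map_sum]
            exact Finset.sum_congr rfl fun z _ => by rw [map_smul, smul_eq_mul]
        _ = φL c := by rw [← hrep]
    have hinnv : ∀ c : V → ℝ, inn H c v = φL c := fun c => by rw [inn_eq_dot, hdotφ]
    have hex2 : ∀ e : Finset V, ∃ p : V × V,
        e ∈ H.E → (p ∈ Ae H e g₀ ∧ mA H e g₀ v = ell H p v) := by
      intro e
      by_cases he : e ∈ H.E
      · obtain ⟨p, hp, hpe⟩ := exists_mA he g₀ v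
        exact ⟨p, fun _ => ⟨hp, hpe⟩⟩
      · exact ⟨(Classical.arbitrary V, Classical.arbitrary V), fun h => absurd h he⟩
    choose pstar hpstar using hex2
    obtain ⟨cstar, hcs⟩ : ∃ c : V → ℝ,
        c = ∑ e ∈ H.E, (H.w e * phi H e g₀) • gen (pstar e) := ⟨_, rfl⟩
    have hcstar : cstar ∈ Cset := by
      rw [hCdef]
      refine ⟨fun e => gen (pstar e), fun e he => subset_convexHull ℝ _ ?_, hcs⟩
      rw [Finset.mem_coe, Finset.mem_image]
      exact ⟨pstar e, (hpstar e he).1, rfl⟩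
    have h1 : inn H (g₀ - f) v = φL (g₀ - f) := hinnv _
    have h2 : ∑ e ∈ H.E, H.w e * (phi H e g₀ * mA H e g₀ v) = φL cstar := by
      rw [hcs, map_sum]
      refine Finset.sum_congr rfl fun e he => ?_
      rw [map_smul, smul_eq_mul]
      have hgenv : ell H (pstar e) v = φL (gen (pstar e)) := by
        rw [← dot_gen_dinv, hdotφ]
      rw [(hpstar e he).2, hgenv]
      ring
    have hva := min_dir hdeg hl hmin v
    rw [h1, h2] at hva
    have h3 : φL (g₀ - f) = -(l * φL (l⁻¹ • (f - g₀))) := by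
      rw [map_smul, smul_eq_mul, map_sub, map_sub]
      field_simp
      ring
    have hlt1 : φL cstar < u := hsep1 cstar hcstar
    have hlt2 : u < φL (l⁻¹ • (f - g₀)) := hsep2
    rw [h3] at hva
    nlinarith
  rw [hCdef] at hmemC
  obtain ⟨bb, hbb, hsum⟩ := hmemC
  have heqc : ∀ e ∈ H.E, dot (bb e) (Dinv H g₀) = phi H e g₀ := by
    intro e he
    refine dot_eq_on_hull ?_ (hbb e he)
    intro b hbmem
    obtain ⟨p, hp, rfl⟩ := Finset.mem_image.mp (Finset.mem_coe.mp hbmem)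
    rw [dot_gen_dinv]
    exact (Finset.mem_filter.mp hp).2
  refine ⟨g₀, ∑ e ∈ H.E, (H.w e * dot (bb e) (Dinv H g₀)) • bb e,
    ⟨bb, fun e he => ⟨?_, ?_⟩, rfl⟩, ?_⟩
  · refine convexHull_mono ?_ (hbb e he)
    intro b hbmem
    obtain ⟨p, hp, rfl⟩ := Finset.mem_image.mp (Finset.mem_coe.mp hbmem)
    have hp' := Finset.mem_product.mp (Finset.mem_filter.mp hp).1
    exact ⟨p.1, hp'.1, p.2, hp'.2, rfl⟩
  · intro b' hb'
    rw [heqc e he]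
    exact dot_dinv_le_phi (H.e_nonempty e he) hb' g₀
  · have hsum2 : ∑ e ∈ H.E, (H.w e * dot (bb e) (Dinv H g₀)) • bb e
        = l⁻¹ • (f - g₀) := by
      rw [hsum]
      exact Finset.sum_congr rfl fun e he => by rw [heqc e he]
    rw [hsum2, smul_inv_smul₀ hl.ne']
    abel
lemma NL_zero_mem : (0 : V → ℝ) ∈ NL H 0 := by
  have hz : Dinv H (0 : V → ℝ) = 0 := by funext z; simp [Dinv]
  refine ⟨fun e => 0, fun e he => ⟨zero_mem_Bp (H.e_nonempty e he), ?_⟩, ?_⟩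
  · intro b' hb'
    rw [hz]
    simp [dot]
  · simp [dot_zero_left]

lemma resolvent_zero [Nonempty V] (hdeg : ∀ x : V, 0 < deg H x) {l : ℝ} (hl : 0 < l) :
    Resolvent H l 0 = 0 := by
  have hpred : ∃ g : V → ℝ, ∃ h ∈ NL H g, (0 : V → ℝ) = g + l • h :=
    ⟨0, 0, NL_zero_mem, by simp⟩
  have hspec : ∃ h ∈ NL H (Resolvent H l 0), (0 : V → ℝ) = Resolvent H l 0 + l • h :=
    Classical.epsilon_spec hpred
  obtain ⟨h, hh, heq⟩ := hspec
  have h0 : inn H (Resolvent H l 0) (Resolvent H l 0)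
      + l * inn H h (Resolvent H l 0) = 0 := by
    have h1 : inn H ((Resolvent H l 0) + l • h) (Resolvent H l 0) = 0 := by
      rw [← heq]; exact inn_zero_left _
    rwa [inn_add_left, inn_smul_left] at h1
  have h1 := lap_inn_self_nonneg hh
  have h2 : inn H (Resolvent H l 0) (Resolvent H l 0) ≤ 0 := by nlinarith
  exact eq_zero_of_inn_self hdeg h2

lemma kd_elem_bound [Nonempty V] (hdeg : ∀ x : V, 0 < deg H x) {l : ℝ} (hl : 0 < l)
    {f : V → ℝ} (hf : f ∈ Lip1 H) (x y : V) :
    inn H (Resolvent H l f) (delta x - delta y)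
      ≤ 2 * l * Real.sqrt (vol H) * (⨆ z : V, 1 / Real.sqrt (deg H z)) + gdist H x y := by
  have hspec : ∃ h ∈ NL H (Resolvent H l f), f = Resolvent H l f + l • h :=
    Classical.epsilon_spec (resolvent_exists hdeg hl f)
  obtain ⟨h, hh, heq⟩ := hspec
  have hkey := resolvent_key hdeg hl hf hh heq
  obtain ⟨M, hM⟩ : ∃ M : ℝ, M = ⨆ z : V, 1 / Real.sqrt (deg H z) := ⟨_, rfl⟩
  have hMb : ∀ z, 1 / Real.sqrt (deg H z) ≤ M := by
    intro z
    rw [hM]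
    exact le_ciSup (f := fun z : V => 1 / Real.sqrt (deg H z))
      (Set.Finite.bddAbove (Set.finite_range _)) z
  have hg : Resolvent H l f = f - l • h := by
    conv_rhs => rw [heq]
    abel
  have hsplit : inn H (Resolvent H l f) (delta x - delta y)
      = inn H f (delta x - delta y) - l * inn H h (delta x - delta y) := by
    rw [hg, inn_sub_left, inn_smul_left]
  have hlip : inn H f (delta x - delta y) ≤ gdist H x y := hf x y
  have habs : ∀ z : V, |h z| / deg H z
      ≤ Real.sqrt (vol H) * (1 / Real.sqrt (deg H z)) := by
    intro z
    have h1 : h z * h z / deg H z ≤ inn H h h := sq_div_le_inn hdeg h z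
    have h2 : h z * h z ≤ inn H h h * deg H z := (div_le_iff₀ (hdeg z)).mp h1
    have h3 : h z * h z ≤ deg H z * vol H := by
      nlinarith [mul_le_mul_of_nonneg_right hkey (hdeg z).le]
    have h4 : |h z| ≤ Real.sqrt (deg H z) * Real.sqrt (vol H) := by
      rw [← Real.sqrt_mul_self_eq_abs, ← Real.sqrt_mul (hdeg z).le]
      exact Real.sqrt_le_sqrt h3
    have hds : Real.sqrt (deg H z) * Real.sqrt (deg H z) = deg H z :=
      Real.mul_self_sqrt (hdeg z).le
    have hsne : Real.sqrt (deg H z) ≠ 0 := ne_of_gt (Real.sqrt_pos.mpr (hdeg z))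
    have h7 : Real.sqrt (vol H) * (1 / Real.sqrt (deg H z)) * deg H z
        = Real.sqrt (deg H z) * Real.sqrt (vol H) := by
      calc Real.sqrt (vol H) * (1 / Real.sqrt (deg H z)) * deg H z
          = Real.sqrt (vol H) * (deg H z / Real.sqrt (deg H z)) := by ring
        _ = Real.sqrt (vol H) * Real.sqrt (deg H z) := by rw [Real.div_sqrt]
        _ = Real.sqrt (deg H z) * Real.sqrt (vol H) := mul_comm _ _
    rw [div_le_iff₀ (hdeg z), h7]
    exact h4
  have habsdiv : ∀ z : V, |h z / deg H z| = |h z| / deg H z := fun z => by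
    rw [abs_div, abs_of_pos (hdeg z)]
  have htri : -(inn H h (delta x - delta y)) ≤ |h x| / deg H x + |h y| / deg H y := by
    rw [inn_delta_sub]
    simp only [ell]
    rw [← habsdiv x, ← habsdiv y]
    linarith [neg_abs_le (h x / deg H x), le_abs_self (h y / deg H y),
      neg_abs_le (h y / deg H y), le_abs_self (h x / deg H x)]
  have hstep : -(inn H h (delta x - delta y))
      ≤ Real.sqrt (vol H) * M + Real.sqrt (vol H) * M := by
    have e1 : |h x| / deg H x ≤ Real.sqrt (vol H) * M :=
      le_trans (habs x) (mul_le_mul_of_nonneg_left (hMb x) (Real.sqrt_nonneg _))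
    have e2 : |h y| / deg H y ≤ Real.sqrt (vol H) * M :=
      le_trans (habs y) (mul_le_mul_of_nonneg_left (hMb y) (Real.sqrt_nonneg _))
    linarith
  have hmul : -(l * inn H h (delta x - delta y))
      ≤ l * (Real.sqrt (vol H) * M + Real.sqrt (vol H) * M) := by
    have := mul_le_mul_of_nonneg_left hstep hl.le
    nlinarith
  have halg : l * (Real.sqrt (vol H) * M + Real.sqrt (vol H) * M)
      = 2 * l * Real.sqrt (vol H) * M := by ring
  rw [← hM, hsplit]
  linarith

theorem stmt8_aux [Nonempty V] (hconn : Connected H)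
    (hdeg : ∀ x : V, 0 < deg H x) (l : ℝ) (hl : 0 < l) (x y : V) :
    0 ≤ KD H l x y ∧
    KD H l x y ≤
      2 * l * Real.sqrt (vol H) * (⨆ z : V, 1 / Real.sqrt (deg H z)) + gdist H x y := by
  classical
  have hlip0 : (0 : V → ℝ) ∈ Lip1 H := by
    intro x' y'
    rw [inn_zero_left]
    exact gdist_nonneg x' y'
  have h0mem : (0 : ℝ) ∈ { r | ∃ f ∈ Lip1 H,
      r = inn H (Resolvent H l f) (delta x - delta y) } := by
    refine ⟨0, hlip0, ?_⟩
    rw [resolvent_zero hdeg hl, inn_zero_left]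
  have hbound : ∀ r ∈ { r | ∃ f ∈ Lip1 H,
      r = inn H (Resolvent H l f) (delta x - delta y) },
      r ≤ 2 * l * Real.sqrt (vol H) * (⨆ z : V, 1 / Real.sqrt (deg H z)) + gdist H x y := by
    rintro r ⟨f, hf, rfl⟩
    exact kd_elem_bound hdeg hl hf x y
  constructor
  · exact le_csSup ⟨_, fun r hr => hbound r hr⟩ h0mem
  · exact csSup_le ⟨0, h0mem⟩ hbound

end AuxDev

/-- with `M = max_x d_x^{-1/2}`,
`0 ≤ KD_λ(x,y) ≤ 2λ vol(V)^{1/2} M + d(x,y)`. -/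
theorem stmt8 [Nonempty V] (H : Hypergraph V) (hconn : Connected H)
    (hdeg : ∀ x : V, 0 < deg H x) (l : ℝ) (hl : 0 < l) (x y : V) :
    0 ≤ KD H l x y ∧
    KD H l x y ≤
      2 * l * Real.sqrt (vol H) * (⨆ z : V, 1 / Real.sqrt (deg H z)) + gdist H x y := by
  exact stmt8_aux hconn hdeg l hl x y

end HypRicci
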